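/- Let C be an (m+n)×(m+n) complex matrix with 1 + C invertible, and let D be the n×n lower-right corner block of C(1+C)⁻¹. Then det(1 − D) = (∑_{X ⊆ {1,…,m}} det C[X, X]) / det(1 + C), where C[X, X] denotes the principal minor of C on rows and columns indexed by X (with the empty minor equal to 1). -/

import Mathlib

open Matrix

private lemma det_piecewise_one {k : ℕ} (M : Matrix (Fin k) (Fin k) ℂ) (s : Finset (Fin k)) :
    Matrix.det (s.piecewise M (1 : Matrix (Fin k) (Fin k) ℂ)) =
      (M.submatrix (fun i : {x // x ∈ s} => i.1) (fun j : {x // x ∈ s} => j.1)).det := by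
  classical
  set N : Matrix (Fin k) (Fin k) ℂ := s.piecewise M (1 : Matrix (Fin k) (Fin k) ℂ) with hN
  let e : {x // x ∈ s} ⊕ {x // x ∉ s} ≃ Fin k := Equiv.sumCompl (· ∈ s)
  have hsub : N.submatrix e e =
      fromBlocks (M.submatrix (fun i : {x // x ∈ s} => i.1) (fun j : {x // x ∈ s} => j.1))
        (M.submatrix (fun i : {x // x ∈ s} => i.1) (fun j : {x // x ∉ s} => j.1))
        0 (1 : Matrix {x // x ∉ s} {x // x ∉ s} ℂ) := by
    ext i j
    rcases i with i | i <;> rcases j with j | j <;>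
      simp only [submatrix_apply, fromBlocks_apply₁₁, fromBlocks_apply₁₂, fromBlocks_apply₂₁,
        fromBlocks_apply₂₂, hN, e, Equiv.sumCompl_apply_inl, Equiv.sumCompl_apply_inr]
    · exact congrFun (Finset.piecewise_eq_of_mem s M (1 : Matrix (Fin k) (Fin k) ℂ) i.2) (j : Fin k)
    · exact congrFun (Finset.piecewise_eq_of_mem s M (1 : Matrix (Fin k) (Fin k) ℂ) i.2) (j : Fin k)
    · refine (congrFun (Finset.piecewise_eq_of_notMem s M (1 : Matrix (Fin k) (Fin k) ℂ) i.2) (j : Fin k)).trans ?_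
      exact Matrix.one_apply_ne fun hh => i.2 (by rw [hh]; exact j.2)
    · refine (congrFun (Finset.piecewise_eq_of_notMem s M (1 : Matrix (Fin k) (Fin k) ℂ) i.2) (j : Fin k)).trans ?_
      by_cases hij : i = j
      · subst hij; simp [Matrix.one_apply]
      · rw [Matrix.one_apply_ne fun hh => hij (Subtype.ext hh),
          Matrix.one_apply_ne hij]
  rw [← Matrix.det_submatrix_equiv_self e N, hsub, Matrix.det_fromBlocks_zero₂₁, Matrix.det_one,
    mul_one]

private lemma det_one_add_sum {k : ℕ} (M : Matrix (Fin k) (Fin k) ℂ) :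
    (1 + M).det = ∑ X : Finset (Fin k),
      (M.submatrix (fun i : {x // x ∈ X} => i.1) (fun j : {x // x ∈ X} => j.1)).det := by
  classical
  have h1 : (1 + M : Matrix (Fin k) (Fin k) ℂ) = M + 1 := add_comm _ _
  have key := (Matrix.detRowAlternating :
      (Fin k → ℂ) [⋀^Fin k]→ₗ[ℂ] ℂ).toMultilinearMap.map_add_univ
      (M : Fin k → Fin k → ℂ) (1 : Matrix (Fin k) (Fin k) ℂ)
  rw [h1]
  show Matrix.detRowAlternating (M + 1 : Matrix (Fin k) (Fin k) ℂ) = _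
  exact key.trans (Finset.sum_congr rfl fun s _ => det_piecewise_one M s)

theorem widom_stmt3 {m n : ℕ} (C : Matrix (Fin (m + n)) (Fin (m + n)) ℂ)
    (h : IsUnit (1 + C))
    (D : Matrix (Fin n) (Fin n) ℂ)
    (hD : D = (C * (1 + C)⁻¹).submatrix (Fin.natAdd m) (Fin.natAdd m)) :
    (1 - D).det =
      (∑ X : Finset (Fin m),
        (C.submatrix (fun i : {x // x ∈ X} => Fin.castAdd n i.1)
          (fun j : {x // x ∈ X} => Fin.castAdd n j.1)).det) / (1 + C).det := by
  classical
  set A : Matrix (Fin (m + n)) (Fin (m + n)) ℂ := 1 + C with hA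
  have hAinv : A * A⁻¹ = 1 := Matrix.mul_nonsing_inv _ (isUnit_iff_isUnit_det _ |>.mp h)
  have hdetA : A.det ≠ 0 := by
    have := (isUnit_iff_isUnit_det _ ).mp h
    exact this.ne_zero
  have hnatAdd_inj : Function.Injective (Fin.natAdd m : Fin n → Fin (m + n)) := by
    intro i j hh
    simpa [Fin.ext_iff] using hh
  -- Step 1 : 1 - D = A⁻¹.submatrix natAdd natAdd
  have hCA : C * A⁻¹ = 1 - A⁻¹ := by
    have : C = A - 1 := by rw [hA]; exact (add_sub_cancel_left 1 C).symm
    rw [this, Matrix.sub_mul, hAinv, Matrix.one_mul]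
  have h1D : (1 : Matrix (Fin n) (Fin n) ℂ) - D
      = (A⁻¹).submatrix (Fin.natAdd m) (Fin.natAdd m) := by
    rw [hD, hCA]
    have hone : (1 : Matrix (Fin (m+n)) (Fin (m+n)) ℂ).submatrix
        (Fin.natAdd m) (Fin.natAdd m) = 1 := Matrix.submatrix_one _ hnatAdd_inj
    ext i j
    simp [Matrix.sub_apply, Matrix.submatrix_apply, ← hone]
  -- Step 2 : Jacobi-type identity via block matrices
  let e : Fin m ⊕ Fin n ≃ Fin (m + n) := finSumFinEquiv
  set A' : Matrix (Fin m ⊕ Fin n) (Fin m ⊕ Fin n) ℂ := A.submatrix e e with hA'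
  set B' : Matrix (Fin m ⊕ Fin n) (Fin m ⊕ Fin n) ℂ := (A⁻¹).submatrix e e with hB'
  have hAB' : A' * B' = 1 := by
    rw [hA', hB', Matrix.submatrix_mul_equiv, hAinv, Matrix.submatrix_one_equiv]
  have hblocks : fromBlocks (A'.toBlocks₁₁ * B'.toBlocks₁₁ + A'.toBlocks₁₂ * B'.toBlocks₂₁)
      (A'.toBlocks₁₁ * B'.toBlocks₁₂ + A'.toBlocks₁₂ * B'.toBlocks₂₂)
      (A'.toBlocks₂₁ * B'.toBlocks₁₁ + A'.toBlocks₂₂ * B'.toBlocks₂₁)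
      (A'.toBlocks₂₁ * B'.toBlocks₁₂ + A'.toBlocks₂₂ * B'.toBlocks₂₂)
      = fromBlocks 1 0 0 1 := by
    rw [← Matrix.fromBlocks_multiply, Matrix.fromBlocks_toBlocks, Matrix.fromBlocks_toBlocks,
      hAB', Matrix.fromBlocks_one]
  have hone12 : Matrix.toBlocks₁₂ (1 : Matrix (Fin m ⊕ Fin n) (Fin m ⊕ Fin n) ℂ) = 0 := by
    rw [← Matrix.fromBlocks_one (l := Fin m) (m := Fin n) (α := ℂ)]
    exact Matrix.toBlocks_fromBlocks₁₂ _ _ _ _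
  have hone22 : Matrix.toBlocks₂₂ (1 : Matrix (Fin m ⊕ Fin n) (Fin m ⊕ Fin n) ℂ) = 1 := by
    rw [← Matrix.fromBlocks_one (l := Fin m) (m := Fin n) (α := ℂ)]
    exact Matrix.toBlocks_fromBlocks₂₂ _ _ _ _
  have h12 : A'.toBlocks₁₁ * B'.toBlocks₁₂ + A'.toBlocks₁₂ * B'.toBlocks₂₂ = 0 := by
    have := congrArg Matrix.toBlocks₁₂ hblocks
    simpa [Matrix.toBlocks_fromBlocks₁₂, hone12] using this
  have h22 : A'.toBlocks₂₁ * B'.toBlocks₁₂ + A'.toBlocks₂₂ * B'.toBlocks₂₂ = 1 := by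
    have := congrArg Matrix.toBlocks₂₂ hblocks
    simpa [Matrix.toBlocks_fromBlocks₂₂, hone22] using this
  set Mm : Matrix (Fin m ⊕ Fin n) (Fin m ⊕ Fin n) ℂ :=
    fromBlocks 1 (B'.toBlocks₁₂) 0 (B'.toBlocks₂₂) with hMm
  have hprod : A' * Mm = fromBlocks (A'.toBlocks₁₁) 0 (A'.toBlocks₂₁) 1 := by
    conv_lhs => rw [← Matrix.fromBlocks_toBlocks A', hMm]
    rw [Matrix.fromBlocks_multiply]
    rw [h12, h22]
    simp
  have hdet : A'.det * (B'.toBlocks₂₂).det = (A'.toBlocks₁₁).det := by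
    have h1 : (A' * Mm).det = A'.det * Mm.det := Matrix.det_mul _ _
    rw [hprod] at h1
    rw [Matrix.det_fromBlocks_zero₁₂] at h1
    rw [hMm, Matrix.det_fromBlocks_zero₂₁] at h1
    simpa [mul_comm, mul_assoc, mul_left_comm] using h1.symm
  -- identify the blocks
  have hB22 : B'.toBlocks₂₂ = (A⁻¹).submatrix (Fin.natAdd m) (Fin.natAdd m) := by
    ext i j
    simp [hB', Matrix.toBlocks₂₂, e, finSumFinEquiv_apply_right]
  have hA11 : A'.toBlocks₁₁ = A.submatrix (Fin.castAdd n) (Fin.castAdd n) := by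
    ext i j
    simp [hA', Matrix.toBlocks₁₁, e, finSumFinEquiv_apply_left]
  have hdetA' : A'.det = A.det := Matrix.det_submatrix_equiv_self e A
  -- Step 3 : the corner of A is 1 + corner of C
  have hcorner : A.submatrix (Fin.castAdd n) (Fin.castAdd n)
      = 1 + C.submatrix (Fin.castAdd n) (Fin.castAdd n) := by
    have hone : (1 : Matrix (Fin (m+n)) (Fin (m+n)) ℂ).submatrix
        (Fin.castAdd n) (Fin.castAdd n) = 1 :=
      Matrix.submatrix_one _ (Fin.castAdd_injective m n)
    rw [hA]
    ext i j
    simp [Matrix.add_apply, Matrix.submatrix_apply, ← hone]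
  -- Step 4 : expand det (1 + corner)
  have hexp : (1 + C.submatrix (Fin.castAdd n) (Fin.castAdd n)).det
      = ∑ X : Finset (Fin m),
        (C.submatrix (fun i : {x // x ∈ X} => Fin.castAdd n i.1)
          (fun j : {x // x ∈ X} => Fin.castAdd n j.1)).det := by
    rw [det_one_add_sum]
    refine Finset.sum_congr rfl fun X _ => ?_
    rw [Matrix.submatrix_submatrix]
    rfl
  -- Put everything together
  rw [h1D, ← hB22]
  rw [eq_div_iff hdetA]
  rw [← hexp, ← hcorner, ← hA11, ← hdetA', mul_comm]
  exact hdet
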